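/- Let m, n ∈ ℕ, p ∈ [1, ∞], A a real m×n matrix, b ∈ ℝᵐ, λ > 0, β ≥ 0, σ > 0, τ ≥ 0. Let xᵏ, v, δ ∈ ℝⁿ satisfy ‖v‖₂ ≤ 1 and ⟨v, xᵏ⟩ = ‖xᵏ‖₂. Define F(x) := ‖Ax − b‖_p + λ‖x‖₁ − λβ⟨v, x⟩ + (σ/2)‖x − xᵏ‖₂² + (τ/2)‖A(x − xᵏ)‖₂², and define f(x) := ‖Ax − b‖_p + λ(‖x‖₁ − β‖x‖₂). Suppose x⁺ ∈ ℝⁿ is a global minimizer of x ↦ F(x) + ⟨δ, x − xᵏ⟩ and the error bound ‖δ‖₂ · ‖x⁺ − xᵏ‖₂ ≤ (σ/4)‖x⁺ − xᵏ‖₂² + (τ/2)‖A(x⁺ − xᵏ)‖₂² holds. Then f(xᵏ) − f(x⁺) ≥ (σ/4)‖x⁺ − xᵏ‖₂². -/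

import Mathlib

open Filter
open scoped ENNReal RealInnerProductSpace

noncomputable def lpNorm (p : ℝ≥0∞) [Fact (1 ≤ p)] {m : ℕ} (y : Fin m → ℝ) : ℝ :=
  ‖(WithLp.equiv p (Fin m → ℝ)).symm y‖

noncomputable def l2Norm {m : ℕ} (y : Fin m → ℝ) : ℝ :=
  ‖(WithLp.equiv 2 (Fin m → ℝ)).symm y‖

noncomputable def l1Norm {n : ℕ} (x : Fin n → ℝ) : ℝ := ∑ i, |x i|

/-- Descent property: one inexact proximal majorization-minimization step decreases the
objective `f(x) = ‖Ax − b‖_p + λ(‖x‖₁ − β‖x‖₂)` by at least `(σ/4)‖x⁺ − xᵏ‖₂²`. -/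
theorem stmt_1 {m n : ℕ} (p : ℝ≥0∞) [Fact (1 ≤ p)]
    (A : Matrix (Fin m) (Fin n) ℝ) (b : Fin m → ℝ) (lam β σ τ : ℝ)
    (hlam : 0 < lam) (hβ : 0 ≤ β) (hσ : 0 < σ) (hτ : 0 ≤ τ)
    (xk v δ : EuclideanSpace ℝ (Fin n))
    (hv1 : ‖v‖ ≤ 1) (hv2 : ⟪v, xk⟫ = ‖xk‖)
    (F f : EuclideanSpace ℝ (Fin n) → ℝ)
    (hF : ∀ x, F x = lpNorm p (A.mulVec x - b) + lam * l1Norm x - lam * β * ⟪v, x⟫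
      + σ / 2 * ‖x - xk‖ ^ 2 + τ / 2 * l2Norm (A.mulVec (x - xk)) ^ 2)
    (hf : ∀ x, f x = lpNorm p (A.mulVec x - b) + lam * (l1Norm x - β * ‖x‖))
    (xp : EuclideanSpace ℝ (Fin n))
    (hmin : ∀ x, F xp + ⟪δ, xp - xk⟫ ≤ F x + ⟪δ, x - xk⟫)
    (herr : ‖δ‖ * ‖xp - xk‖ ≤ σ / 4 * ‖xp - xk‖ ^ 2 + τ / 2 * l2Norm (A.mulVec (xp - xk)) ^ 2) :
    f xk - f xp ≥ σ / 4 * ‖xp - xk‖ ^ 2 := by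
  have hk := hmin xk
  have hxk0 : (xk : EuclideanSpace ℝ (Fin n)) - xk = 0 := sub_self xk
  have hA0 : A.mulVec ((xk : EuclideanSpace ℝ (Fin n)) - xk) = 0 := by
    rw [sub_self]; exact A.mulVec_zero
  have hl20 : l2Norm (A.mulVec ((xk : EuclideanSpace ℝ (Fin n)) - xk)) = 0 := by
    rw [hA0]; simp [l2Norm]
  rw [hF xk, hF xp, hxk0] at hk
  have hz : l2Norm (0 : Fin m → ℝ) = 0 := by simp [l2Norm]
  simp only [sub_self, Matrix.mulVec_zero, hz, norm_zero, inner_zero_right] at hk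
  rw [hv2] at hk
  have h1 : ⟪v, xp⟫ ≤ ‖xp‖ := by
    have := real_inner_le_norm v xp
    nlinarith [norm_nonneg xp]
  have h2 : -(‖δ‖ * ‖xp - xk‖) ≤ ⟪δ, xp - xk⟫ := by
    have := abs_real_inner_le_norm δ (xp - xk)
    have := neg_abs_le (⟪δ, xp - xk⟫ : ℝ)
    linarith
  rw [hf xk, hf xp]
  nlinarith [hv2, mul_nonneg (mul_nonneg hlam.le hβ) (sub_nonneg.2 h1)]
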